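/- Fix n ∈ ℕ, n ≥ 1, and let H ∈ ℝ^{n×n} be the matrix H(i,j) = 1{i ≥ j}/(n − j + 1). Define the Nash social welfare NSW(x) = (Π_{i∈[n]} x(i))^{1/n}. Then inf { NSW(Hℓ)/NSW(ℓ) : ℓ ∈ ℝ^n, 0 < ℓ(1) ≤ ℓ(2) ≤ ⋯ ≤ ℓ(n) } = (n!)^{−1/n}; moreover, n · (n!)^{−1/n} → e as n → ∞. Consequently, the competitive ratio of water-filling for Nash social welfare maximization with n offline nodes equals (n!)^{−1/n}. -/

import Mathlib

open Finset MeasureTheory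

/-- A request sequence with `n` offline nodes and `m` online nodes: each online
node `t` has a nonempty neighborhood `N t ⊆ [n]` and a positive quantity `q t`. -/
structure ReqSeq (n m : ℕ) where
  N : Fin m → Finset (Fin n)
  q : Fin m → ℝ
  N_nonempty : ∀ t, (N t).Nonempty
  q_pos : ∀ t, 0 < q t

/-- `Δ(N, q)`: feasible allocations for a single online node. -/
def allocSet (n : ℕ) (N : Finset (Fin n)) (qt : ℝ) : Set (Fin n → ℝ) :=
  {x | (∀ i, 0 ≤ x i) ∧ (∀ i, i ∉ N → x i = 0) ∧ ∑ i, x i = qt}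

/-- A feasible allocation trajectory on a request sequence. -/
def Feasible {n m : ℕ} (E : ReqSeq n m) (x : Fin m → Fin n → ℝ) : Prop :=
  ∀ t, x t ∈ allocSet n (E.N t) (E.q t)

/-- `Δ(E)`: the Minkowski sum of the per-node allocation sets (feasible load vectors). -/
def loads {n m : ℕ} (E : ReqSeq n m) : Set (Fin n → ℝ) :=
  {ℓ | ∃ x, Feasible E x ∧ ℓ = ∑ t, x t}

/-- Sum of the `k` largest entries of `x`. -/
noncomputable def topSum {n : ℕ} (x : Fin n → ℝ) (k : ℕ) : ℝ :=
  sSup ((fun s : Finset (Fin n) => ∑ i ∈ s, x i) '' {s | s.card = k})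

/-- `Majorizes x y` means `x ⪰ y`: equal total sums and every `k`-largest-entries
sum of `x` dominates that of `y`. -/
def Majorizes {n : ℕ} (x y : Fin n → ℝ) : Prop :=
  (∑ i, x i = ∑ i, y i) ∧ ∀ k ≤ n, topSum y k ≤ topSum x k

/-- `f` is Schur-concave on the nonnegative orthant: `x ⪯ y → f x ≥ f y`. -/
def SchurConcave {n : ℕ} (f : (Fin n → ℝ) → ℝ) : Prop :=
  ∀ x y : Fin n → ℝ, (∀ i, 0 ≤ x i) → (∀ i, 0 ≤ y i) → Majorizes y x → f y ≤ f x

/-- `g` is Schur-convex on the nonnegative orthant: `x ⪯ y → g x ≤ g y`. -/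
def SchurConvex {n : ℕ} (g : (Fin n → ℝ) → ℝ) : Prop :=
  ∀ x y : Fin n → ℝ, (∀ i, 0 ≤ x i) → (∀ i, 0 ≤ y i) → Majorizes y x → g x ≤ g y

/-- Cumulative load strictly before online node `t`. -/
def prevLoad {n m : ℕ} (x : Fin m → Fin n → ℝ) (t : Fin m) : Fin n → ℝ :=
  fun i => ∑ s ∈ Finset.univ.filter (fun s => s < t), x s i

/-- Minimum of `v` over the neighborhood of online node `t`. -/
noncomputable def reqMinOn {n m : ℕ} (E : ReqSeq n m) (t : Fin m) (v : Fin n → ℝ) : ℝ :=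
  (E.N t).inf' (E.N_nonempty t) v

/-- `x` is the water-filling allocation trajectory on `E`: at each arrival `t`,
`x t` maximizes the minimum post-allocation load over `N t`. -/
def IsWFAlloc {n m : ℕ} (E : ReqSeq n m) (x : Fin m → Fin n → ℝ) : Prop :=
  Feasible E x ∧
  ∀ t, ∀ y ∈ allocSet n (E.N t) (E.q t),
    reqMinOn E t (fun i => y i + prevLoad x t i) ≤ reqMinOn E t (fun i => x t i + prevLoad x t i)

-- The load vector produced by water-filling (via choice; the trajectory exists and is unique).
open Classical in
noncomputable def wfLoad {n m : ℕ} (E : ReqSeq n m) : Fin n → ℝ :=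
  if h : ∃ x, IsWFAlloc E x then ∑ t, h.choose t else 0

/-- `ℓ` is the majorization-minimal element of `Δ(E)`. -/
def IsOpt {n m : ℕ} (E : ReqSeq n m) (ℓ : Fin n → ℝ) : Prop :=
  ℓ ∈ loads E ∧ ∀ ℓ' ∈ loads E, Majorizes ℓ' ℓ

-- `OPT(E)`, the majorization-minimal feasible load vector (via choice).
open Classical in
noncomputable def optLoad {n m : ℕ} (E : ReqSeq n m) : Fin n → ℝ :=
  if h : ∃ ℓ, IsOpt E ℓ then h.choose else 0

/-- A request sequence is nested if `N 1 ⊇ N 2 ⊇ ⋯ ⊇ N m`. -/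
def IsNested {n m : ℕ} (E : ReqSeq n m) : Prop :=
  ∀ s t : Fin m, s ≤ t → E.N t ⊆ E.N s

/-- `E_{n,m,q}`: request sequences with total quantity `q`. -/
def seqs (n m : ℕ) (q : ℝ) : Set (ReqSeq n m) := {E | ∑ t, E.q t = q}

/-- The harmonic-series matrix applied to a vector: `(Hℓ)(i) = Σ_{j ≤ i} ℓ(j)/(n − j + 1)`
(in 1-indexed notation). -/
noncomputable def Hvec (n : ℕ) (ℓ : Fin n → ℝ) : Fin n → ℝ :=
  fun i => ∑ j ∈ Finset.univ.filter (fun j => j ≤ i), ℓ j / ((n - (j : ℕ) : ℕ) : ℝ)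

/-- The water-filling height of online node `t`: the common post-allocation load of
the offline nodes in the support of `x t`. -/
noncomputable def height {n m : ℕ} (x : Fin m → Fin n → ℝ) (t : Fin m) : ℝ :=
  sSup {c | ∃ i, 0 < x t i ∧ c = x t i + prevLoad x t i}


/-- Nash social welfare: `NSW(x) = (Π_i x(i))^{1/n}`. -/
noncomputable def NSW (n : ℕ) (x : Fin n → ℝ) : ℝ :=
  (∏ i, x i) ^ ((n : ℝ)⁻¹)



section infra
variable {n : ℕ}

lemma finStrictMono_le {k : ℕ} (f : Fin k → Fin n) (hf : StrictMono f) :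
    ∀ j : ℕ, ∀ h : j < k, j ≤ (f ⟨j, h⟩ : ℕ) := by
  intro j
  induction j with
  | zero => intro h; exact Nat.zero_le _
  | succ j ih =>
    intro h
    have h' : j < k := Nat.lt_of_succ_lt h
    have h1 := ih h'
    have h2 : f ⟨j, h'⟩ < f ⟨j+1, h⟩ := hf (by simp [Fin.lt_def])
    have h3 : (f ⟨j, h'⟩ : ℕ) < (f ⟨j+1, h⟩ : ℕ) := h2
    omega

lemma finStrictMono_ge {k : ℕ} (f : Fin k → Fin n) (hf : StrictMono f) (i : Fin k) :
    (f i : ℕ) ≤ n - k + i := by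
  have hrev : StrictMono (fun j : Fin k => Fin.rev (f (Fin.rev j))) := by
    intro a b hab
    exact Fin.rev_lt_rev.mpr (hf (Fin.rev_lt_rev.mpr hab))
  have := finStrictMono_le _ hrev (Fin.rev i) (Fin.rev i).2
  have h1 : ((Fin.rev i : Fin k) : ℕ) = k - 1 - i := by
    simp [Fin.rev]; omega
  have h2 : (Fin.rev (f (Fin.rev ⟨(Fin.rev i : Fin k), (Fin.rev i).2⟩)) : ℕ)
      = n - 1 - (f i : ℕ) := by
    have heq : (Fin.rev ⟨((Fin.rev i : Fin k) : ℕ), (Fin.rev i).2⟩ : Fin k) = i := by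
      apply Fin.ext
      rw [Fin.val_rev]
      have := i.2
      simp [Fin.val_rev]
      omega
    rw [heq, Fin.val_rev]
    omega
  have hfi : (f i : ℕ) < n := (f i).2
  have hik : (i : ℕ) < k := i.2
  simp only [h2] at this
  omega

/-- the `k` largest indices of `Fin n` -/
def topIdx (n k : ℕ) : Finset (Fin n) := univ.filter (fun i => n ≤ k + i.val)

/-- the `k` smallest indices of `Fin n` -/
def botIdx (n k : ℕ) : Finset (Fin n) := univ.filter (fun i => i.val < k)

lemma topIdx_eq_image (hk : k ≤ n) :
    topIdx n k = image (fun j : Fin k => (⟨n - k + j, by omega⟩ : Fin n)) univ := by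
  ext i
  simp only [topIdx, mem_filter, mem_univ, true_and, mem_image]
  constructor
  · intro h
    exact ⟨⟨i - (n - k), by omega⟩, by ext; simp; omega⟩
  · rintro ⟨j, rfl⟩; simp; omega

lemma sum_topIdx (u : Fin n → ℝ) (hk : k ≤ n) :
    ∑ i ∈ topIdx n k, u i = ∑ j : Fin k, u ⟨n - k + j, by omega⟩ := by
  rw [topIdx_eq_image hk]
  rw [Finset.sum_image]
  intro a _ b _ hab
  have : n - k + (a:ℕ) = n - k + (b:ℕ) := congrArg Fin.val hab
  exact Fin.ext (by omega)

lemma card_topIdx (hk : k ≤ n) : (topIdx n k).card = k := by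
  rw [topIdx_eq_image hk, Finset.card_image_of_injective, card_univ, Fintype.card_fin]
  intro a b hab
  have : n - k + (a:ℕ) = n - k + (b:ℕ) := congrArg Fin.val hab
  exact Fin.ext (by omega)

lemma botIdx_eq_image (hk : k ≤ n) :
    botIdx n k = image (fun j : Fin k => (⟨j, by omega⟩ : Fin n)) univ := by
  ext i
  simp only [botIdx, mem_filter, mem_univ, true_and, mem_image]
  constructor
  · intro h; exact ⟨⟨i, by omega⟩, by ext; simp⟩
  · rintro ⟨j, rfl⟩; simpa using j.2

lemma sum_botIdx (u : Fin n → ℝ) (hk : k ≤ n) :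
    ∑ i ∈ botIdx n k, u i = ∑ j : Fin k, u ⟨j, by omega⟩ := by
  rw [botIdx_eq_image hk, Finset.sum_image]
  intro a _ b _ hab
  have : (a:ℕ) = (b:ℕ) := by simpa [Fin.ext_iff] using hab
  exact Fin.ext this

lemma sum_finset_eq_sum_orderEmb (u : Fin n → ℝ) (s : Finset (Fin n)) {k : ℕ}
    (hs : s.card = k) :
    ∑ i ∈ s, u i = ∑ j : Fin k, u (s.orderEmbOfFin hs j) := by
  have himg : s = image (s.orderEmbOfFin hs) univ := by
    ext i
    simp only [mem_image, mem_univ, true_and]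
    constructor
    · intro hi
      have : i ∈ Set.range (s.orderEmbOfFin hs) := by
        rw [Finset.range_orderEmbOfFin]; exact hi
      obtain ⟨j, hj⟩ := this; exact ⟨j, hj⟩
    · rintro ⟨j, rfl⟩; exact Finset.orderEmbOfFin_mem s hs j
  conv_lhs => rw [himg]
  rw [Finset.sum_image (fun a _ b _ h => (s.orderEmbOfFin hs).injective h)]

/-- rearrangement: sum over any `k`-set is at most the sum of the `k` largest of a
monotone function. -/
lemma sum_le_sum_topIdx (u : Fin n → ℝ) (hu : Monotone u) (s : Finset (Fin n)) {k : ℕ}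
    (hs : s.card = k) (hk : k ≤ n) :
    ∑ i ∈ s, u i ≤ ∑ i ∈ topIdx n k, u i := by
  rw [sum_finset_eq_sum_orderEmb u s hs, sum_topIdx u hk]
  apply Finset.sum_le_sum
  intro j _
  apply hu
  have := finStrictMono_ge _ (s.orderEmbOfFin hs).strictMono j
  exact this

lemma sum_botIdx_le_sum (u : Fin n → ℝ) (hu : Monotone u) (s : Finset (Fin n)) {k : ℕ}
    (hs : s.card = k) (hk : k ≤ n) :
    ∑ i ∈ botIdx n k, u i ≤ ∑ i ∈ s, u i := by
  rw [sum_finset_eq_sum_orderEmb u s hs, sum_botIdx u hk]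
  apply Finset.sum_le_sum
  intro j _
  apply hu
  have := finStrictMono_le _ (s.orderEmbOfFin hs).strictMono j j.2
  simpa [Fin.le_def] using this

lemma sum_botIdx_add_sum_topIdx (u : Fin n → ℝ) (hk : k ≤ n) :
    ∑ i ∈ botIdx n k, u i + ∑ i ∈ topIdx n (n - k), u i = ∑ i, u i := by
  have : topIdx n (n - k) = univ.filter (fun i : Fin n => ¬ i.val < k) := by
    ext i
    simp only [topIdx, mem_filter, mem_univ, true_and]
    have := i.2
    omega
  rw [this, botIdx]
  exact Finset.sum_filter_add_sum_filter_not _ _ _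

lemma botIdx_succ (hk : k < n) :
    botIdx n (k+1) = insert (⟨k, hk⟩ : Fin n) (botIdx n k) := by
  ext i
  simp only [botIdx, mem_filter, mem_univ, true_and, mem_insert, Fin.ext_iff]
  omega

end infra

lemma card_botIdx {n k : ℕ} (hk : k ≤ n) : (botIdx n k).card = k := by
  rw [botIdx_eq_image hk, Finset.card_image_of_injective, card_univ, Fintype.card_fin]
  intro a b hab
  have : (a:ℕ) = (b:ℕ) := by simpa [Fin.ext_iff] using hab
  exact Fin.ext this

lemma prod_sub_factorial (n : ℕ) : ∏ k : Fin n, ((n - (k:ℕ) : ℕ) : ℝ) = (n.factorial : ℝ) := by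
  have h1 : ∏ k : Fin n, (n - (k:ℕ)) = n.factorial := by
    rw [Fin.prod_univ_eq_prod_range (fun k => n - k) n]
    have h2 := Finset.prod_range_reflect (fun j => j + 1) n
    have h3 : ∀ j ∈ Finset.range n, n - 1 - j + 1 = n - j := by
      intro j hj; have := Finset.mem_range.mp hj; omega
    rw [Finset.prod_congr rfl h3] at h2
    rw [h2, Finset.prod_range_add_one_eq_factorial]
  rw [← h1]
  push_cast
  rfl

section topsum
variable {n : ℕ}

lemma bddAbove_topSum_set (v : Fin n → ℝ) (k : ℕ) :
    BddAbove ((fun s : Finset (Fin n) => ∑ i ∈ s, v i) '' {s | s.card = k}) :=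
  Set.Finite.bddAbove (Set.Finite.image _ (Set.toFinite _))

lemma mem_topSum_set (v : Fin n → ℝ) (σ : Equiv.Perm (Fin n)) {k : ℕ} (hk : k ≤ n) :
    ∑ i ∈ topIdx n k, v (σ i) ∈
      ((fun s : Finset (Fin n) => ∑ i ∈ s, v i) '' {s | s.card = k}) := by
  refine ⟨(topIdx n k).image σ, ?_, ?_⟩
  · simp only [Set.mem_setOf_eq]
    rw [Finset.card_image_of_injective _ σ.injective, card_topIdx hk]
  · show ∑ i ∈ (topIdx n k).image σ, v i = _
    rw [Finset.sum_image (fun a _ b _ h => σ.injective h)]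

lemma topSum_eq (v : Fin n → ℝ) (σ : Equiv.Perm (Fin n)) (hu : Monotone (v ∘ σ)) {k : ℕ}
    (hk : k ≤ n) : topSum v k = ∑ i ∈ topIdx n k, v (σ i) := by
  apply le_antisymm
  · apply csSup_le ⟨_, mem_topSum_set v σ hk⟩
    rintro r ⟨s, hs, rfl⟩
    have hre : ∑ i ∈ s, v i = ∑ j ∈ s.image σ.symm, (v ∘ σ) j := by
      rw [Finset.sum_image (fun a _ b _ h => σ.symm.injective h)]
      simp
    simp only [Set.mem_setOf_eq] at hs
    show ∑ i ∈ s, v i ≤ _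
    rw [hre]
    exact sum_le_sum_topIdx _ hu _
      (by rw [Finset.card_image_of_injective _ σ.symm.injective, hs]) hk
  · exact le_csSup (bddAbove_topSum_set v k) (mem_topSum_set v σ hk)

lemma topIdx_succ_nm (j : Fin n) :
    topIdx n (n - (j : ℕ)) = insert j (topIdx n (n - ((j : ℕ) + 1))) := by
  ext i
  simp only [topIdx, mem_filter, mem_univ, true_and, mem_insert, Fin.ext_iff]
  have := i.2
  have := j.2
  omega

lemma sorted_eq_topSum_diff (v : Fin n → ℝ) (σ : Equiv.Perm (Fin n))
    (hu : Monotone (v ∘ σ)) (j : Fin n) :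
    v (σ j) = topSum v (n - (j : ℕ)) - topSum v (n - ((j : ℕ) + 1)) := by
  rw [topSum_eq v σ hu (by omega), topSum_eq v σ hu (by omega), topIdx_succ_nm j,
    Finset.sum_insert (by simp [topIdx]; omega)]
  ring

lemma prod_eq_of_topSum_eq (v w : Fin n → ℝ)
    (h : ∀ k ≤ n, topSum v k = topSum w k) : ∏ i, v i = ∏ i, w i := by
  let σv := Tuple.sort v
  let σw := Tuple.sort w
  rw [← Equiv.prod_comp σv v, ← Equiv.prod_comp σw w]
  apply Finset.prod_congr rfl
  intro j _
  rw [sorted_eq_topSum_diff v σv (Tuple.monotone_sort v) j,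
    sorted_eq_topSum_diff w σw (Tuple.monotone_sort w) j,
    h _ (by omega), h _ (by omega)]

end topsum

section wfexist
variable {n m : ℕ}

lemma continuous_minOn (E : ReqSeq n m) (t : Fin m) (p : Fin n → ℝ) :
    Continuous (fun y : Fin n → ℝ => reqMinOn E t (fun i => y i + p i)) := by
  unfold reqMinOn
  apply Continuous.finset_inf'_apply
  intro i _
  exact (continuous_apply i).add continuous_const

lemma allocSet_nonempty (E : ReqSeq n m) (t : Fin m) :
    (allocSet n (E.N t) (E.q t)).Nonempty := by
  classical
  obtain ⟨i₀, hi₀⟩ := E.N_nonempty t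
  refine ⟨fun i => if i = i₀ then E.q t else 0, ?_, ?_, ?_⟩
  · intro i
    by_cases h : i = i₀ <;> simp [h, (E.q_pos t).le]
  · intro i hi
    have : i ≠ i₀ := fun h => hi (h ▸ hi₀)
    simp [this]
  · simp

lemma allocSet_isCompact (E : ReqSeq n m) (t : Fin m) :
    IsCompact (allocSet n (E.N t) (E.q t)) := by
  have hsub : allocSet n (E.N t) (E.q t) ⊆ Set.Icc (0 : Fin n → ℝ) (fun _ => E.q t) := by
    rintro x ⟨h0, _, hsum⟩
    refine ⟨fun i => h0 i, fun i => ?_⟩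
    calc x i ≤ ∑ j, x j := Finset.single_le_sum (fun j _ => h0 j) (Finset.mem_univ i)
    _ = E.q t := hsum
  have hclosed : IsClosed (allocSet n (E.N t) (E.q t)) := by
    have h1 : IsClosed {x : Fin n → ℝ | ∀ i, 0 ≤ x i} := by
      have : {x : Fin n → ℝ | ∀ i, 0 ≤ x i} = ⋂ i, {x | 0 ≤ x i} := by
        ext x; simp
      rw [this]
      exact isClosed_iInter fun i => isClosed_le continuous_const (continuous_apply i)
    have h2 : IsClosed {x : Fin n → ℝ | ∀ i, i ∉ E.N t → x i = 0} := by
      have : {x : Fin n → ℝ | ∀ i, i ∉ E.N t → x i = 0}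
          = ⋂ i ∈ {i | i ∉ E.N t}, {x | x i = 0} := by
        ext x; simp
      rw [this]
      exact isClosed_biInter fun i _ => isClosed_eq (continuous_apply i) continuous_const
    have h3 : IsClosed {x : Fin n → ℝ | ∑ i, x i = E.q t} :=
      isClosed_eq (by continuity) continuous_const
    have heq : allocSet n (E.N t) (E.q t)
        = {x : Fin n → ℝ | ∀ i, 0 ≤ x i} ∩ ({x | ∀ i, i ∉ E.N t → x i = 0}
          ∩ {x | ∑ i, x i = E.q t}) := rfl
    rw [heq]
    exact h1.inter (h2.inter h3)
  exact IsCompact.of_isClosed_subset isCompact_Icc hclosed hsub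

lemma exists_wfStep (E : ReqSeq n m) (t : Fin m) (p : Fin n → ℝ) :
    ∃ z ∈ allocSet n (E.N t) (E.q t), ∀ y ∈ allocSet n (E.N t) (E.q t),
      reqMinOn E t (fun i => y i + p i) ≤ reqMinOn E t (fun i => z i + p i) := by
  obtain ⟨z, hz, hmax⟩ := (allocSet_isCompact E t).exists_isMaxOn (allocSet_nonempty E t)
    (continuous_minOn E t p).continuousOn
  exact ⟨z, hz, fun y hy => hmax hy⟩

noncomputable def wfStep (E : ReqSeq n m) (t : Fin m) (p : Fin n → ℝ) : Fin n → ℝ :=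
  (exists_wfStep E t p).choose

lemma wfStep_mem (E : ReqSeq n m) (t : Fin m) (p : Fin n → ℝ) :
    wfStep E t p ∈ allocSet n (E.N t) (E.q t) := (exists_wfStep E t p).choose_spec.1

lemma wfStep_max (E : ReqSeq n m) (t : Fin m) (p : Fin n → ℝ) :
    ∀ y ∈ allocSet n (E.N t) (E.q t),
      reqMinOn E t (fun i => y i + p i) ≤ reqMinOn E t (fun i => wfStep E t p i + p i) :=
  (exists_wfStep E t p).choose_spec.2

noncomputable def xwf (E : ReqSeq n m) : ℕ → Fin m → Fin n → ℝ
  | 0 => fun _ _ => 0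
  | (k+1) => fun t => if (t : ℕ) = k then wfStep E t (prevLoad (xwf E k) t) else xwf E k t

lemma xwf_stable (E : ReqSeq n m) : ∀ k', ∀ k ≤ k', ∀ t : Fin m, (t : ℕ) < k →
    xwf E k' t = xwf E k t := by
  intro k'
  induction k' with
  | zero => intro k hk t ht; omega
  | succ k' ih =>
    intro k hk t ht
    rcases Nat.eq_or_lt_of_le hk with h | h
    · rw [h]
    · have hk' : k ≤ k' := by omega
      have hne : (t : ℕ) ≠ k' := by omega
      show xwf E (k'+1) t = xwf E k t
      simp only [xwf]
      rw [if_neg hne]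
      exact ih k hk' t ht

lemma exists_isWFAlloc (E : ReqSeq n m) : ∃ x, IsWFAlloc E x := by
  refine ⟨xwf E m, ?_⟩
  have key : ∀ t : Fin m, xwf E m t = wfStep E t (prevLoad (xwf E m) t) := by
    intro t
    have h1 : xwf E m t = xwf E ((t : ℕ) + 1) t :=
      xwf_stable E m ((t : ℕ) + 1) t.2 t (Nat.lt_succ_self _)
    have h2 : prevLoad (xwf E (t : ℕ)) t = prevLoad (xwf E m) t := by
      funext i
      unfold prevLoad
      apply Finset.sum_congr rfl
      intro s hs
      have hst : s < t := (Finset.mem_filter.mp hs).2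
      have hst' : (s : ℕ) < (t : ℕ) := hst
      have hsm : (s : ℕ) < m := s.2
      rw [xwf_stable E (t : ℕ) ((s:ℕ)+1) (by omega) s (Nat.lt_succ_self _),
        xwf_stable E m ((s:ℕ)+1) (by omega) s (Nat.lt_succ_self _)]
    rw [h1]
    simp only [xwf]
    rw [if_pos trivial, h2]
  constructor
  · intro t
    rw [key t]
    exact wfStep_mem E t _
  · intro t y hy
    have := wfStep_max E t (prevLoad (xwf E m) t) y hy
    rw [key t]
    exact this

end wfexist

section nowaste
variable {n m : ℕ}

lemma wf_no_waste {E : ReqSeq n m} {x : Fin m → Fin n → ℝ} (hx : IsWFAlloc E x)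
    (t : Fin m) (i : Fin n) (hi : 0 < x t i) :
    x t i + prevLoad x t i = reqMinOn E t (fun j => x t j + prevLoad x t j) := by
  classical
  set p := prevLoad x t with hp
  set c := reqMinOn E t (fun j => x t j + p j) with hc
  obtain ⟨hnn, hsupp, hsum⟩ := hx.1 t
  have hiN : i ∈ E.N t := by
    by_contra h
    rw [hsupp i h] at hi
    exact lt_irrefl 0 hi
  have hge : ∀ j ∈ E.N t, c ≤ x t j + p j := fun j hj => Finset.inf'_le _ hj
  by_contra hne
  have hgt : c < x t i + p i := lt_of_le_of_ne (hge i hiN) (Ne.symm hne)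
  set L := (E.N t).filter (fun j => x t j + p j = c) with hL
  have hLne : L.Nonempty := by
    obtain ⟨j, hj, hjeq⟩ := Finset.exists_mem_eq_inf' (E.N_nonempty t)
      (fun j => x t j + p j)
    exact ⟨j, Finset.mem_filter.mpr ⟨hj, hjeq.symm⟩⟩
  have hiL : i ∉ L := by
    intro hmem
    exact absurd ((Finset.mem_filter.mp hmem).2) (ne_of_gt hgt)
  have hLcard : (0 : ℝ) < L.card := by
    have := Finset.card_pos.mpr hLne
    exact_mod_cast this
  set D := (E.N t) \ L with hD
  have hiD : i ∈ D := Finset.mem_sdiff.mpr ⟨hiN, hiL⟩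
  have hDne : D.Nonempty := ⟨i, hiD⟩
  set δ := D.inf' hDne (fun j => x t j + p j - c) with hδ
  have hδpos : 0 < δ := by
    rw [hδ, Finset.lt_inf'_iff]
    intro j hj
    obtain ⟨hjN, hjL⟩ := Finset.mem_sdiff.mp hj
    have : x t j + p j ≠ c := fun h => hjL (Finset.mem_filter.mpr ⟨hjN, h⟩)
    have := lt_of_le_of_ne (hge j hjN) (Ne.symm this)
    linarith
  have hδle : δ ≤ x t i + p i - c := Finset.inf'_le _ hiD
  set ε := min (x t i) δ with hε
  have hεpos : 0 < ε := lt_min hi hδpos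
  set ε' := ε / 2 with hε'
  have hε'pos : 0 < ε' := by positivity
  set y := fun j => x t j + (if j ∈ L then ε' / L.card else 0) - (if j = i then ε' else 0)
    with hy
  have hymem : y ∈ allocSet n (E.N t) (E.q t) := by
    refine ⟨?_, ?_, ?_⟩
    · intro j
      rw [hy]
      by_cases hjL : j ∈ L
      · have hji : j ≠ i := fun h => hiL (h ▸ hjL)
        simp only [if_pos hjL, if_neg hji]
        have : 0 ≤ ε' / L.card := le_of_lt (div_pos hε'pos hLcard)
        linarith [hnn j]
      · by_cases hji : j = i
        · simp only [if_neg hjL, if_pos hji]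
          have : ε' ≤ x t j := by
            rw [hji, hε']
            have : ε ≤ x t i := min_le_left _ _
            linarith
          linarith
        · simp only [if_neg hjL, if_neg hji]
          linarith [hnn j]
    · intro j hj
      have hjL : j ∉ L := fun h => hj (Finset.mem_filter.mp h).1
      have hji : j ≠ i := fun h => hj (h ▸ hiN)
      rw [hy]
      simp only [if_neg hjL, if_neg hji]
      rw [hsupp j hj]
      ring
    · rw [hy]
      rw [Finset.sum_sub_distrib, Finset.sum_add_distrib, hsum]
      have h1 : ∑ j, (if j ∈ L then ε' / L.card else 0) = ε' := by
        rw [Finset.sum_ite_mem, Finset.univ_inter, Finset.sum_const, nsmul_eq_mul]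
        field_simp
      have h2 : ∑ j : Fin n, (if j = i then ε' else 0) = ε' := by
        simp
      rw [h1, h2]
      ring
  have hopt := hx.2 t y hymem
  have hlt : c < reqMinOn E t (fun j => y j + p j) := by
    rw [reqMinOn, Finset.lt_inf'_iff]
    intro j hjN
    rw [hy]
    by_cases hjL : j ∈ L
    · have hji : j ≠ i := fun h => hiL (h ▸ hjL)
      simp only [if_pos hjL, if_neg hji]
      have hjc : x t j + p j = c := (Finset.mem_filter.mp hjL).2
      have : 0 < ε' / L.card := div_pos hε'pos hLcard
      linarith
    · by_cases hji : j = i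
      · simp only [if_neg hjL, if_pos hji]
        subst hji
        have : ε' < ε := by rw [hε']; linarith
        have : ε ≤ δ := min_le_right _ _
        linarith
      · simp only [if_neg hjL, if_neg hji]
        have : x t j + p j ≠ c := fun h => hjL (Finset.mem_filter.mpr ⟨hjN, h⟩)
        have := lt_of_le_of_ne (hge j hjN) (Ne.symm this)
        linarith
  rw [← hp, ← hc] at hopt
  exact absurd hopt (not_le.mpr hlt)

end nowaste

section accounting
variable {n m : ℕ}

lemma load_nonneg {E : ReqSeq n m} {x : Fin m → Fin n → ℝ} (hx : Feasible E x) (i : Fin n) :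
    0 ≤ ∑ t, x t i :=
  Finset.sum_nonneg fun t _ => (hx t).1 i

lemma prevLoad_add_le {E : ReqSeq n m} {x : Fin m → Fin n → ℝ} (hx : Feasible E x)
    (t : Fin m) (i : Fin n) :
    x t i + prevLoad x t i ≤ ∑ s, x s i := by
  classical
  unfold prevLoad
  rw [← Finset.sum_filter_add_sum_filter_not univ (fun s => s < t) (fun s => x s i)]
  have ht : t ∈ univ.filter (fun s => ¬ s < t) := by simp
  have h1 : x t i ≤ ∑ s ∈ univ.filter (fun s => ¬ s < t), x s i :=
    Finset.single_le_sum (fun s _ => (hx s).1 i) ht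
  linarith

lemma wf_mass_account {E : ReqSeq n m} {x : Fin m → Fin n → ℝ} (hx : IsWFAlloc E x)
    (B : Finset (Fin n)) (c : ℝ) (hc : 0 ≤ c) (hB : ∀ i ∈ B, (∑ t, x t i) ≤ c) :
    ∑ t ∈ univ.filter (fun t => ((E.N t) ∩ B).Nonempty), E.q t
      ≤ ∑ i, min (∑ t, x t i) c := by
  classical
  set T := univ.filter (fun t => ((E.N t) ∩ B).Nonempty) with hT
  have h1 : ∑ t ∈ T, E.q t = ∑ i, ∑ t ∈ T, x t i := by
    rw [Finset.sum_comm]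
    exact Finset.sum_congr rfl fun t _ => ((hx.1 t).2.2).symm
  rw [h1]
  apply Finset.sum_le_sum
  intro i _
  have hfull : ∑ t ∈ T.filter (fun t => 0 < x t i), x t i = ∑ t ∈ T, x t i :=
    Finset.sum_filter_of_ne (fun t _ hne => lt_of_le_of_ne ((hx.1 t).1 i) (Ne.symm hne))
  rcases (T.filter (fun t => 0 < x t i)).eq_empty_or_nonempty with he | hne
  · rw [← hfull, he, Finset.sum_empty]
    exact le_min (load_nonneg hx.1 i) hc
  · apply le_min
    · exact Finset.sum_le_sum_of_subset_of_nonneg (Finset.filter_subset _ _)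
        (fun t _ _ => (hx.1 t).1 i)
    · set t' := (T.filter (fun t => 0 < x t i)).max' hne with ht'
      have ht'mem := (T.filter (fun t => 0 < x t i)).max'_mem hne
      obtain ⟨ht'T, ht'pos⟩ := Finset.mem_filter.mp ht'mem
      have hsub : T.filter (fun t => 0 < x t i) ⊆ univ.filter (fun s => s ≤ t') := by
        intro t htmem
        simp only [Finset.mem_filter, Finset.mem_univ, true_and]
        exact Finset.le_max' _ t htmem
      have h2 : ∑ t ∈ T, x t i ≤ ∑ s ∈ univ.filter (fun s => s ≤ t'), x s i := by
        rw [← hfull]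
        exact Finset.sum_le_sum_of_subset_of_nonneg hsub (fun t _ _ => (hx.1 t).1 i)
      have hins : univ.filter (fun s => s ≤ t') = insert t' (univ.filter (fun s => s < t')) := by
        ext s
        simp only [Finset.mem_filter, Finset.mem_univ, true_and, Finset.mem_insert]
        constructor
        · intro h; rcases lt_or_eq_of_le h with h | h
          · exact Or.inr h
          · exact Or.inl h
        · rintro (h | h)
          · exact le_of_eq h
          · exact le_of_lt h
      have h3 : ∑ s ∈ univ.filter (fun s => s ≤ t'), x s i = x t' i + prevLoad x t' i := by
        rw [hins, Finset.sum_insert (by simp)]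
        rfl
      obtain ⟨i₀, hi₀⟩ := (Finset.mem_filter.mp ht'T).2
      obtain ⟨hi₀N, hi₀B⟩ := Finset.mem_inter.mp hi₀
      have h4 : x t' i + prevLoad x t' i
          = reqMinOn E t' (fun j => x t' j + prevLoad x t' j) := wf_no_waste hx t' i ht'pos
      have h5 : reqMinOn E t' (fun j => x t' j + prevLoad x t' j) ≤ x t' i₀ + prevLoad x t' i₀ :=
        Finset.inf'_le _ hi₀N
      have h6 : x t' i₀ + prevLoad x t' i₀ ≤ ∑ s, x s i₀ := prevLoad_add_le hx.1 t' i₀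
      have h7 : (∑ s, x s i₀) ≤ c := hB i₀ hi₀B
      linarith
end accounting

section mainbound
variable {n m : ℕ}

lemma loads_nonneg {E : ReqSeq n m} {ℓ : Fin n → ℝ} (hℓ : ℓ ∈ loads E) (i : Fin n) :
    0 ≤ ℓ i := by
  obtain ⟨y, hy, rfl⟩ := hℓ
  rw [Finset.sum_apply]
  exact Finset.sum_nonneg fun t _ => (hy t).1 i

lemma loads_sum_eq {E : ReqSeq n m} {ℓ : Fin n → ℝ} (hℓ : ℓ ∈ loads E) :
    ∑ i, ℓ i = ∑ t, E.q t := by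
  obtain ⟨y, hy, rfl⟩ := hℓ
  simp only [Finset.sum_apply]
  rw [Finset.sum_comm]
  exact Finset.sum_congr rfl fun t _ => (hy t).2.2

lemma loads_restrict_le {E : ReqSeq n m} {ℓ : Fin n → ℝ} (hℓ : ℓ ∈ loads E)
    (B : Finset (Fin n)) :
    ∑ i ∈ B, ℓ i ≤ ∑ t ∈ univ.filter (fun t => ((E.N t) ∩ B).Nonempty), E.q t := by
  classical
  obtain ⟨y, hy, rfl⟩ := hℓ
  simp only [Finset.sum_apply]
  rw [Finset.sum_comm]
  rw [← Finset.sum_filter_add_sum_filter_not univ (fun t => ((E.N t) ∩ B).Nonempty)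
    (fun t => ∑ i ∈ B, y t i)]
  have hz : ∑ t ∈ univ.filter (fun t => ¬ ((E.N t) ∩ B).Nonempty), ∑ i ∈ B, y t i = 0 := by
    apply Finset.sum_eq_zero
    intro t ht
    apply Finset.sum_eq_zero
    intro i hiB
    have hnt := (Finset.mem_filter.mp ht).2
    have : i ∉ E.N t := by
      intro hiN
      exact hnt ⟨i, Finset.mem_inter.mpr ⟨hiN, hiB⟩⟩
    exact (hy t).2.1 i this
  rw [hz, add_zero]
  apply Finset.sum_le_sum
  intro t _
  calc ∑ i ∈ B, y t i ≤ ∑ i, y t i :=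
        Finset.sum_le_sum_of_subset_of_nonneg (Finset.subset_univ B)
          (fun i _ _ => (hy t).1 i)
  _ = E.q t := (hy t).2.2

theorem prod_opt_le_factorial_mul (E : ReqSeq n m) {ℓ : Fin n → ℝ} (hℓ : IsOpt E ℓ)
    {x : Fin m → Fin n → ℝ} (hx : IsWFAlloc E x) :
    ∏ i, ℓ i ≤ (n.factorial : ℝ) * ∏ i, (∑ t, x t i) := by
  classical
  set w := fun i => ∑ t, x t i with hw
  have hwloads : w ∈ loads E := ⟨x, hx.1, by funext i; rw [Finset.sum_apply]⟩
  obtain ⟨hℓmem, hℓmin⟩ := hℓ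
  have hmaj := hℓmin w hwloads
  have hℓnn : ∀ i, 0 ≤ ℓ i := loads_nonneg hℓmem
  have hwnn : ∀ i, 0 ≤ w i := fun i => load_nonneg hx.1 i
  set σw := Tuple.sort w with hσw
  set σℓ := Tuple.sort ℓ with hσℓ
  have hu : Monotone (w ∘ σw) := Tuple.monotone_sort w
  have hv : Monotone (ℓ ∘ σℓ) := Tuple.monotone_sort ℓ
  have key : ∀ k : Fin n, ℓ (σℓ k) ≤ ((n - (k:ℕ) : ℕ) : ℝ) * w (σw k) := by
    intro k
    have hkn : (k:ℕ) < n := k.2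
    set B := (botIdx n ((k:ℕ)+1)).image σw with hB
    have hcardB : B.card = (k:ℕ)+1 := by
      rw [hB, Finset.card_image_of_injective _ σw.injective, card_botIdx (by omega)]
    set c := w (σw k) with hcdef
    have hc0 : 0 ≤ c := hwnn _
    have hBle : ∀ i ∈ B, w i ≤ c := by
      intro i hi
      obtain ⟨j, hj, rfl⟩ := Finset.mem_image.mp hi
      have hjk : (j:ℕ) < (k:ℕ)+1 := by
        have := Finset.mem_filter.mp hj
        exact this.2
      exact hu (show j ≤ k from Fin.le_def.mpr (by omega))
    -- chain of inequalities
    have h2 : ∑ i ∈ B, ℓ i ≤ ∑ t ∈ univ.filter (fun t => ((E.N t) ∩ B).Nonempty), E.q t :=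
      loads_restrict_le hℓmem B
    have h1 : ∑ t ∈ univ.filter (fun t => ((E.N t) ∩ B).Nonempty), E.q t
        ≤ ∑ i, min (w i) c := wf_mass_account hx B c hc0 hBle
    have h3 : ∑ i, min (w i) c
        ≤ ∑ j ∈ botIdx n ((k:ℕ)+1), w (σw j) + ((n - ((k:ℕ)+1) : ℕ) : ℝ) * c := by
      rw [← Finset.sum_sdiff (Finset.subset_univ B)]
      have hA : ∑ i ∈ B, min (w i) c ≤ ∑ j ∈ botIdx n ((k:ℕ)+1), w (σw j) := by
        rw [hB, Finset.sum_image (fun a _ b _ h => σw.injective h)]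
        exact Finset.sum_le_sum fun j _ => min_le_left _ _
      have hC : ∑ i ∈ univ \ B, min (w i) c ≤ ((n - ((k:ℕ)+1) : ℕ) : ℝ) * c := by
        have hcard : (univ \ B).card = n - ((k:ℕ)+1) := by
          rw [Finset.card_sdiff_of_subset (Finset.subset_univ B), Finset.card_univ,
            Fintype.card_fin, hcardB]
        calc ∑ i ∈ univ \ B, min (w i) c ≤ ∑ _i ∈ univ \ B, c :=
              Finset.sum_le_sum fun i _ => min_le_right _ _
        _ = ((n - ((k:ℕ)+1) : ℕ) : ℝ) * c := by
              rw [Finset.sum_const, hcard, nsmul_eq_mul]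
      linarith
    have hbotw : ∑ j ∈ botIdx n (k:ℕ), w (σw j) = ∑ i, w i - topSum w (n - (k:ℕ)) := by
      rw [topSum_eq w σw hu (by omega : n - (k:ℕ) ≤ n)]
      have hsplit := sum_botIdx_add_sum_topIdx (fun j => w (σw j)) (le_of_lt hkn)
      have htot : ∑ j, w (σw j) = ∑ i, w i := Equiv.sum_comp σw w
      linarith
    have hbotl : ∑ j ∈ botIdx n (k:ℕ), ℓ (σℓ j) = ∑ i, ℓ i - topSum ℓ (n - (k:ℕ)) := by
      rw [topSum_eq ℓ σℓ hv (by omega : n - (k:ℕ) ≤ n)]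
      have hsplit := sum_botIdx_add_sum_topIdx (fun j => ℓ (σℓ j)) (le_of_lt hkn)
      have htot : ∑ j, ℓ (σℓ j) = ∑ i, ℓ i := Equiv.sum_comp σℓ ℓ
      linarith
    have h4 : ∑ j ∈ botIdx n (k:ℕ), w (σw j) ≤ ∑ j ∈ botIdx n (k:ℕ), ℓ (σℓ j) := by
      rw [hbotw, hbotl]
      have := hmaj.2 (n - (k:ℕ)) (by omega)
      have := hmaj.1
      linarith
    have h5 : ∑ j ∈ botIdx n ((k:ℕ)+1), ℓ (σℓ j) ≤ ∑ i ∈ B, ℓ i := by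
      have himg : ∑ i ∈ B, ℓ i = ∑ j ∈ B.image σℓ.symm, ℓ (σℓ j) := by
        rw [Finset.sum_image (fun a _ b _ h => σℓ.symm.injective h)]
        apply Finset.sum_congr rfl
        intro a _
        rw [Equiv.apply_symm_apply]
      rw [himg]
      exact sum_botIdx_le_sum _ hv _
        (by rw [Finset.card_image_of_injective _ σℓ.symm.injective, hcardB]) (by omega)
    have hkfin : (⟨(k:ℕ), hkn⟩ : Fin n) = k := rfl
    have hnotmem : k ∉ botIdx n (k:ℕ) := by simp [botIdx]
    have h6v : ∑ j ∈ botIdx n ((k:ℕ)+1), ℓ (σℓ j)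
        = ℓ (σℓ k) + ∑ j ∈ botIdx n (k:ℕ), ℓ (σℓ j) := by
      rw [botIdx_succ hkn, hkfin, Finset.sum_insert hnotmem]
    have h6u : ∑ j ∈ botIdx n ((k:ℕ)+1), w (σw j)
        = w (σw k) + ∑ j ∈ botIdx n (k:ℕ), w (σw j) := by
      rw [botIdx_succ hkn, hkfin, Finset.sum_insert hnotmem]
    have hcast : ((n - ((k:ℕ)+1) : ℕ) : ℝ) = ((n - (k:ℕ) : ℕ) : ℝ) - 1 := by
      have hn : (n - (k:ℕ)) = (n - ((k:ℕ)+1)) + 1 := by omega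
      rw [hn]
      push_cast
      ring
    rw [hcast] at h3
    have hck : c = w (σw k) := hcdef
    linarith
  calc ∏ i, ℓ i = ∏ k, ℓ (σℓ k) := (Equiv.prod_comp σℓ ℓ).symm
  _ ≤ ∏ k : Fin n, ((n - (k:ℕ) : ℕ) : ℝ) * w (σw k) :=
      Finset.prod_le_prod (fun k _ => hℓnn _) (fun k _ => key k)
  _ = (∏ k : Fin n, ((n - (k:ℕ) : ℕ) : ℝ)) * ∏ k, w (σw k) := Finset.prod_mul_distrib
  _ = (n.factorial : ℝ) * ∏ i, (∑ t, x t i) := by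
      rw [prod_sub_factorial, Equiv.prod_comp σw w]

end mainbound

section nested
variable {n : ℕ}

/-- the nested hard instance -/
noncomputable def nestedE (n : ℕ) (x : ℝ) (hx : 0 < x) : ReqSeq n n where
  N := fun t => univ.filter (fun i => (t:ℕ) ≤ (i:ℕ))
  q := fun t => x ^ (n - 1 - (t:ℕ))
  N_nonempty := fun t => ⟨t, by simp⟩
  q_pos := fun t => pow_pos hx _

lemma nestedE_N_card (x : ℝ) (hx : 0 < x) (t : Fin n) :
    ((nestedE n x hx).N t).card = n - (t:ℕ) := by
  have : (nestedE n x hx).N t = topIdx n (n - (t:ℕ)) := by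
    ext i
    simp only [nestedE, topIdx, mem_filter, mem_univ, true_and]
    have := t.2
    have := i.2
    omega
  rw [this, card_topIdx (by omega)]

lemma nested_wf_alloc (x : ℝ) (hx0 : 0 < x) {xa : Fin n → Fin n → ℝ}
    (hxa : IsWFAlloc (nestedE n x hx0) xa) :
    ∀ t i : Fin n, xa t i
      = if (t:ℕ) ≤ (i:ℕ) then x ^ (n - 1 - (t:ℕ)) / ((n - (t:ℕ) : ℕ) : ℝ) else 0 := by
  classical
  set E := nestedE n x hx0 with hE
  have hNmem : ∀ t i : Fin n, i ∈ E.N t ↔ (t:ℕ) ≤ (i:ℕ) := by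
    intro t i
    simp [hE, nestedE]
  suffices H : ∀ T : ℕ, ∀ hT : T < n, ∀ i, xa ⟨T, hT⟩ i
      = if T ≤ (i:ℕ) then x ^ (n - 1 - T) / ((n - T : ℕ) : ℝ) else 0 by
    intro t i
    exact H t.1 t.2 i
  intro T hind
  induction T using Nat.strong_induction_on with
  | _ T IH =>
    set t : Fin n := ⟨T, hind⟩ with htdef
    have IH : ∀ s : Fin n, s < t → ∀ i, xa s i
        = if (s:ℕ) ≤ (i:ℕ) then x ^ (n - 1 - (s:ℕ)) / ((n - (s:ℕ) : ℕ) : ℝ) else 0 := by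
      intro s hst i
      exact IH s.1 hst s.2 i
    -- prev load is constant P on N t
    set P := ∑ s ∈ univ.filter (fun s : Fin n => s < t),
      x ^ (n - 1 - (s:ℕ)) / ((n - (s:ℕ) : ℕ) : ℝ) with hP
    have hprev : ∀ i : Fin n, (t:ℕ) ≤ (i:ℕ) → prevLoad xa t i = P := by
      intro i hi
      unfold prevLoad
      rw [hP]
      apply Finset.sum_congr rfl
      intro s hs
      have hst : s < t := (Finset.mem_filter.mp hs).2
      rw [IH s hst i]
      have : (s:ℕ) ≤ (i:ℕ) := le_trans (le_of_lt hst) hi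
      rw [if_pos this]
    obtain ⟨hnn, hsupp, hsum⟩ := hxa.1 t
    set c := reqMinOn E t (fun j => xa t j + prevLoad xa t j) with hc
    have hge : ∀ j ∈ E.N t, c ≤ xa t j + prevLoad xa t j := fun j hj => Finset.inf'_le _ hj
    -- some coordinate gets positive mass
    have hex : ∃ i₁, 0 < xa t i₁ := by
      by_contra h
      push_neg at h
      have : ∀ i, xa t i = 0 := fun i => le_antisymm (h i) (hnn i)
      have : ∑ i, xa t i = 0 := Finset.sum_eq_zero fun i _ => this i
      rw [hsum] at this
      exact absurd this (ne_of_gt (E.q_pos t))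
    obtain ⟨i₁, hi₁⟩ := hex
    have hi₁N : i₁ ∈ E.N t := by
      by_contra h
      rw [hsupp i₁ h] at hi₁
      exact lt_irrefl 0 hi₁
    have hcP : P < c := by
      have hnw := wf_no_waste hxa t i₁ hi₁
      rw [hprev i₁ ((hNmem t i₁).mp hi₁N), ← hc] at hnw
      linarith
    -- all coordinates in N t are positive hence at level c
    have hall : ∀ i ∈ E.N t, xa t i = c - P := by
      intro i hiN
      rcases eq_or_lt_of_le (hnn i) with h0 | hpos
      · exfalso
        have hgei := hge i hiN
        rw [← h0, hprev i ((hNmem t i).mp hiN)] at hgei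
        linarith
      · have hnw := wf_no_waste hxa t i hpos
        rw [hprev i ((hNmem t i).mp hiN), ← hc] at hnw
        linarith
    -- sum over N t
    have hcard : (E.N t).card = n - (t:ℕ) := nestedE_N_card x hx0 t
    have hsplit : ∑ i, xa t i = ∑ i ∈ E.N t, xa t i := by
      rw [eq_comm]
      apply Finset.sum_subset (Finset.subset_univ _)
      intro i _ hiN
      exact hsupp i hiN
    have hq : E.q t = ((n - (t:ℕ) : ℕ) : ℝ) * (c - P) := by
      rw [← hsum, hsplit, Finset.sum_congr rfl hall, Finset.sum_const, hcard, nsmul_eq_mul]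
    have hcardpos : 0 < ((n - (t:ℕ) : ℕ) : ℝ) := by
      have := t.2
      have : 0 < n - (t:ℕ) := by omega
      exact_mod_cast this
    intro i
    by_cases hi : (t:ℕ) ≤ (i:ℕ)
    · rw [if_pos hi]
      have hiN : i ∈ E.N t := (hNmem t i).mpr hi
      rw [hall i hiN]
      have hqt : E.q t = x ^ (n - 1 - (t:ℕ)) := rfl
      rw [← hqt, hq]
      field_simp
      exact (mul_div_cancel_right₀ _ (ne_of_gt hcardpos)).symm
    · rw [if_neg hi]
      exact hsupp i (fun h => hi ((hNmem t i).mp h))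

end nested

section nested2
variable {n : ℕ}

/-- the geometric load vector -/
noncomputable def qv (n : ℕ) (x : ℝ) : Fin n → ℝ := fun j => x ^ (n - 1 - (j:ℕ))

lemma qv_pos {x : ℝ} (hx0 : 0 < x) (j : Fin n) : 0 < qv n x j := pow_pos hx0 _

lemma qv_monotone {x : ℝ} (hx0 : 0 ≤ x) (hx1 : x ≤ 1) : Monotone (qv n x) := by
  intro a b hab
  exact pow_le_pow_of_le_one hx0 hx1 (by have : (a:ℕ) ≤ (b:ℕ) := hab; omega)

lemma nestedE_q_eq {x : ℝ} (hx0 : 0 < x) : (nestedE n x hx0).q = qv n x := rfl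

lemma wfLoad_nestedE {x : ℝ} (hx0 : 0 < x) :
    wfLoad (nestedE n x hx0) = Hvec n (qv n x) := by
  classical
  have hex := exists_isWFAlloc (nestedE n x hx0)
  rw [wfLoad, dif_pos hex]
  have hxa := hex.choose_spec
  funext i
  rw [Finset.sum_apply]
  rw [Finset.sum_congr rfl (fun t _ => nested_wf_alloc x hx0 hxa t i)]
  rw [Hvec, Finset.sum_filter]
  apply Finset.sum_congr rfl
  intro t _
  by_cases h : (t:ℕ) ≤ (i:ℕ)
  · rw [if_pos h, if_pos (Fin.le_def.mpr h)]
    rfl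
  · rw [if_neg h, if_neg (fun hle => h (Fin.le_def.mp hle))]

lemma qv_mem_loads {x : ℝ} (hx0 : 0 < x) : qv n x ∈ loads (nestedE n x hx0) := by
  classical
  refine ⟨fun t i => if i = t then qv n x t else 0, ?_, ?_⟩
  · intro t
    refine ⟨?_, ?_, ?_⟩
    · intro i
      by_cases h : i = t <;> simp [h, le_of_lt (qv_pos hx0 t)]
    · intro i hiN
      have : i ≠ t := by
        intro h
        apply hiN
        rw [h]
        simp [nestedE]
      simp [this]
    · simp [nestedE_q_eq hx0]
  · funext i
    rw [Finset.sum_apply]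
    simp

lemma isOpt_nestedE {x : ℝ} (hx0 : 0 < x) (hx1 : x ≤ 1) :
    IsOpt (nestedE n x hx0) (qv n x) := by
  classical
  refine ⟨qv_mem_loads hx0, ?_⟩
  intro ℓ' hℓ'
  constructor
  · rw [loads_sum_eq hℓ', nestedE_q_eq hx0]
  · intro k hk
    have h1 : topSum (qv n x) k = ∑ i ∈ topIdx n k, qv n x i := by
      have hmono : Monotone (qv n x ∘ (Equiv.refl (Fin n))) :=
        qv_monotone (le_of_lt hx0) hx1
      have := topSum_eq (qv n x) (Equiv.refl (Fin n)) hmono hk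
      simpa using this
    have h2 : ∑ i ∈ topIdx n k, ℓ' i ≤ topSum ℓ' k :=
      le_csSup (bddAbove_topSum_set _ _) ⟨topIdx n k, card_topIdx hk, rfl⟩
    have h3 : ∑ i ∈ topIdx n k, qv n x i ≤ ∑ i ∈ topIdx n k, ℓ' i := by
      obtain ⟨y, hy, rfl⟩ := hℓ'
      simp only [Finset.sum_apply]
      rw [Finset.sum_comm]
      have hstep : ∀ t ∈ topIdx n k, qv n x t = ∑ i ∈ topIdx n k, y t i := by
        intro t ht
        have htk : n ≤ k + (t:ℕ) := (Finset.mem_filter.mp ht).2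
        have hq : qv n x t = ∑ i, y t i := ((hy t).2.2).symm
        rw [hq]
        refine (Finset.sum_subset (Finset.subset_univ _) ?_).symm
        intro i _ hiT
        apply (hy t).2.1
        intro hiN
        apply hiT
        have : (t:ℕ) ≤ (i:ℕ) := by
          have := Finset.mem_filter.mp hiN
          exact this.2
        simp only [topIdx, Finset.mem_filter, Finset.mem_univ, true_and]
        omega
      calc ∑ t ∈ topIdx n k, qv n x t = ∑ t ∈ topIdx n k, ∑ i ∈ topIdx n k, y t i :=
            Finset.sum_congr rfl hstep
      _ ≤ ∑ t, ∑ i ∈ topIdx n k, y t i :=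
            Finset.sum_le_sum_of_subset_of_nonneg (Finset.subset_univ _)
              (fun t _ _ => Finset.sum_nonneg fun i _ => (hy t).1 i)
    rw [h1]
    exact le_trans h3 h2

lemma optLoad_topSum_nestedE {x : ℝ} (hx0 : 0 < x) (hx1 : x ≤ 1) :
    ∀ k ≤ n, topSum (optLoad (nestedE n x hx0)) k = topSum (qv n x) k := by
  classical
  have hopt : IsOpt (nestedE n x hx0) (qv n x) := isOpt_nestedE hx0 hx1
  have hex : ∃ ℓ, IsOpt (nestedE n x hx0) ℓ := ⟨_, hopt⟩
  have hcs := hex.choose_spec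
  intro k hk
  have h1 := (hcs.2 (qv n x) hopt.1).2 k hk
  have h2 := (hopt.2 _ hcs.1).2 k hk
  rw [optLoad, dif_pos hex]
  exact le_antisymm h1 h2

lemma prod_optLoad_nestedE {x : ℝ} (hx0 : 0 < x) (hx1 : x ≤ 1) :
    ∏ i, optLoad (nestedE n x hx0) i = ∏ i, qv n x i :=
  prod_eq_of_topSum_eq _ _ (optLoad_topSum_nestedE hx0 hx1)

end nested2

section nswbounds
variable {n : ℕ}

lemma NSW_def (v : Fin n → ℝ) : NSW n v = (∏ i, v i) ^ ((n:ℝ)⁻¹) := rfl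

lemma NSW_pos_of_prod_pos {v : Fin n → ℝ} (h : 0 < ∏ i, v i) : 0 < NSW n v :=
  Real.rpow_pos_of_pos h _

lemma prod_pos_of_NSW_pos (hn : 1 ≤ n) {v : Fin n → ℝ} (hv : ∀ i, 0 ≤ v i)
    (h : 0 < NSW n v) : 0 < ∏ i, v i := by
  rcases (Finset.prod_nonneg (fun i _ => hv i)).lt_or_eq with hlt | heq
  · exact hlt
  · exfalso
    rw [NSW_def, ← heq, Real.zero_rpow (by positivity : ((n:ℝ))⁻¹ ≠ 0)] at h
    exact lt_irrefl 0 h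

lemma NSW_ratio_ge (hn : 1 ≤ n) {ℓ w : Fin n → ℝ} (hℓpos : 0 < ∏ i, ℓ i)
    (hwnn : 0 ≤ ∏ i, w i) (hle : ∏ i, ℓ i ≤ (n.factorial : ℝ) * ∏ i, w i) :
    (n.factorial : ℝ) ^ (-(n:ℝ)⁻¹) ≤ NSW n w / NSW n ℓ := by
  have hf : (0:ℝ) < n.factorial := by positivity
  have hNl : 0 < NSW n ℓ := NSW_pos_of_prod_pos hℓpos
  rw [le_div_iff₀ hNl]
  have h1 : ((∏ i, ℓ i) / (n.factorial : ℝ)) ^ ((n:ℝ)⁻¹) ≤ NSW n w := by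
    rw [NSW_def]
    apply Real.rpow_le_rpow (by positivity)
    · rw [div_le_iff₀ hf]
      linarith [hle, mul_comm (n.factorial : ℝ) (∏ i, w i)]
    · positivity
  have h2 : ((∏ i, ℓ i) / (n.factorial : ℝ)) ^ ((n:ℝ)⁻¹)
      = (n.factorial : ℝ) ^ (-(n:ℝ)⁻¹) * NSW n ℓ := by
    rw [Real.div_rpow (le_of_lt hℓpos) (le_of_lt hf), NSW_def,
      Real.rpow_neg (le_of_lt hf)]
    field_simp
  rw [h2] at h1
  exact h1

lemma Hvec_pos {ℓ : Fin n → ℝ} (hpos : ∀ i, 0 < ℓ i) (i : Fin n) : 0 < Hvec n ℓ i := by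
  apply Finset.sum_pos
  · intro j hj
    have hj2 : (j:ℕ) < n := j.2
    have : (0:ℝ) < ((n - (j:ℕ) : ℕ) : ℝ) := by
      have : 0 < n - (j:ℕ) := by omega
      exact_mod_cast this
    exact div_pos (hpos j) this
  · exact ⟨i, by simp⟩

lemma part1_lower (hn : 1 ≤ n) {ℓ : Fin n → ℝ} (hpos : ∀ i, 0 < ℓ i) :
    (n.factorial : ℝ) ^ (-(n:ℝ)⁻¹) ≤ NSW n (Hvec n ℓ) / NSW n ℓ := by
  apply NSW_ratio_ge hn (Finset.prod_pos fun i _ => hpos i)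
    (le_of_lt (Finset.prod_pos fun i _ => Hvec_pos hpos i))
  have key : ∀ i : Fin n, ℓ i ≤ ((n - (i:ℕ) : ℕ) : ℝ) * Hvec n ℓ i := by
    intro i
    have hin : (i:ℕ) < n := i.2
    have hc : (0:ℝ) < ((n - (i:ℕ) : ℕ) : ℝ) := by
      have : 0 < n - (i:ℕ) := by omega
      exact_mod_cast this
    have h1 : ℓ i / ((n - (i:ℕ) : ℕ) : ℝ) ≤ Hvec n ℓ i := by
      apply Finset.single_le_sum (f := fun j : Fin n => ℓ j / ((n - (j:ℕ) : ℕ) : ℝ))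
      · intro j _
        have hj2 : (j:ℕ) < n := j.2
        have : (0:ℝ) < ((n - (j:ℕ) : ℕ) : ℝ) := by
          have : 0 < n - (j:ℕ) := by omega
          exact_mod_cast this
        exact le_of_lt (div_pos (hpos j) this)
      · simp
    rw [div_le_iff₀ hc] at h1
    linarith [h1, mul_comm (Hvec n ℓ i) ((n - (i:ℕ) : ℕ) : ℝ)]
  calc ∏ i, ℓ i ≤ ∏ i : Fin n, ((n - (i:ℕ) : ℕ) : ℝ) * Hvec n ℓ i :=
        Finset.prod_le_prod (fun i _ => le_of_lt (hpos i)) (fun i _ => key i)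
  _ = (∏ i : Fin n, ((n - (i:ℕ) : ℕ) : ℝ)) * ∏ i, Hvec n ℓ i := Finset.prod_mul_distrib
  _ = (n.factorial : ℝ) * ∏ i, Hvec n ℓ i := by rw [prod_sub_factorial]

lemma part3_lower (hn : 1 ≤ n) {m : ℕ} (E : ReqSeq n m) (hopt : 0 < NSW n (optLoad E)) :
    (n.factorial : ℝ) ^ (-(n:ℝ)⁻¹) ≤ NSW n (wfLoad E) / NSW n (optLoad E) := by
  classical
  have hex : ∃ ℓ, IsOpt E ℓ := by
    by_contra h
    rw [optLoad, dif_neg h] at hopt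
    have : ∏ i : Fin n, (0:ℝ) = 0 := by
      rw [Finset.prod_const]
      exact zero_pow (by rw [Finset.card_univ, Fintype.card_fin]; omega)
    rw [NSW_def] at hopt
    simp only [Pi.zero_apply] at hopt
    rw [this, Real.zero_rpow (by positivity : ((n:ℝ))⁻¹ ≠ 0)] at hopt
    exact lt_irrefl 0 hopt
  have hw := exists_isWFAlloc E
  have hcs := hex.choose_spec
  have hws := hw.choose_spec
  have hoptload : optLoad E = hex.choose := by rw [optLoad, dif_pos hex]
  have hwfload : wfLoad E = fun i => ∑ t, hw.choose t i := by
    rw [wfLoad, dif_pos hw]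
    funext i
    rw [Finset.sum_apply]
  rw [hoptload] at hopt ⊢
  rw [hwfload]
  apply NSW_ratio_ge hn
  · exact prod_pos_of_NSW_pos hn (loads_nonneg hcs.1) hopt
  · exact Finset.prod_nonneg fun i _ => load_nonneg hws.1 i
  · exact prod_opt_le_factorial_mul E hcs hws

end nswbounds

section analytic
open Filter Topology
variable {n : ℕ}

noncomputable def ratioF (n : ℕ) : ℝ → ℝ :=
  fun x => NSW n (Hvec n (qv n x)) / NSW n (qv n x)

noncomputable def polyF (n : ℕ) : ℝ → ℝ :=
  fun x => ∏ i : Fin n, ∑ j ∈ univ.filter (fun j : Fin n => j ≤ i),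
    x ^ ((i:ℕ) - (j:ℕ)) / ((n - (j:ℕ) : ℕ) : ℝ)

lemma polyF_continuous : Continuous (polyF n) := by
  unfold polyF
  apply continuous_finset_prod
  intro i _
  apply continuous_finset_sum
  intro j _
  exact (continuous_pow _).div_const _

lemma polyF_zero (hn : 1 ≤ n) : polyF n 0 = 1 / (n.factorial : ℝ) := by
  unfold polyF
  have hterm : ∀ i : Fin n, ∑ j ∈ univ.filter (fun j : Fin n => j ≤ i),
      (0:ℝ) ^ ((i:ℕ) - (j:ℕ)) / ((n - (j:ℕ) : ℕ) : ℝ)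
      = 1 / ((n - (i:ℕ) : ℕ) : ℝ) := by
    intro i
    rw [Finset.sum_eq_single i]
    · rw [Nat.sub_self, pow_zero]
    · intro j hj hne
      have hji : j ≤ i := (Finset.mem_filter.mp hj).2
      have : 0 < (i:ℕ) - (j:ℕ) := by
        have h1 : (j:ℕ) ≤ (i:ℕ) := hji
        have h2 : (j:ℕ) ≠ (i:ℕ) := fun h => hne (Fin.ext h)
        omega
      rw [zero_pow (by omega), zero_div]
    · intro h
      simp at h
  rw [Finset.prod_congr rfl (fun i _ => hterm i)]
  rw [Finset.prod_div_distrib, Finset.prod_const_one, prod_sub_factorial]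

lemma ratioF_eq_polyF (hn : 1 ≤ n) {x : ℝ} (hx0 : 0 < x) :
    ratioF n x = (polyF n x) ^ ((n:ℝ)⁻¹) := by
  have hqpos : ∀ j : Fin n, 0 < qv n x j := qv_pos hx0
  have hHpos : ∀ i : Fin n, 0 < Hvec n (qv n x) i := Hvec_pos hqpos
  have hprodq : 0 < ∏ i, qv n x i := Finset.prod_pos fun i _ => hqpos i
  have hprodH : 0 < ∏ i, Hvec n (qv n x) i := Finset.prod_pos fun i _ => hHpos i
  unfold ratioF
  rw [NSW_def, NSW_def, ← Real.div_rpow (le_of_lt hprodH) (le_of_lt hprodq)]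
  congr 1
  rw [← Finset.prod_div_distrib]
  unfold polyF
  apply Finset.prod_congr rfl
  intro i _
  rw [Hvec, Finset.sum_div]
  apply Finset.sum_congr rfl
  intro j hj
  have hji : (j:ℕ) ≤ (i:ℕ) := Fin.le_def.mp (Finset.mem_filter.mp hj).2
  have hin : (i:ℕ) < n := i.2
  have hxne : x ≠ 0 := ne_of_gt hx0
  rw [div_div, mul_comm ((n - (j:ℕ) : ℕ) : ℝ) (qv n x i), ← div_div]
  congr 1
  show qv n x j / qv n x i = x ^ ((i:ℕ) - (j:ℕ))
  unfold qv
  rw [div_eq_mul_inv, ← pow_sub₀ x hxne (by omega : n - 1 - (i:ℕ) ≤ n - 1 - (j:ℕ))]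
  congr 1
  omega

lemma tendsto_ratioF (hn : 1 ≤ n) :
    Tendsto (ratioF n) (nhdsWithin 0 (Set.Ioo (0:ℝ) 1))
      (nhds ((n.factorial : ℝ) ^ (-(n:ℝ)⁻¹))) := by
  have h0 : ContinuousAt (fun x => (polyF n x) ^ ((n:ℝ)⁻¹)) 0 := by
    apply ContinuousAt.rpow_const (polyF_continuous.continuousAt)
    right
    positivity
  have h1 : Tendsto (fun x => (polyF n x) ^ ((n:ℝ)⁻¹)) (nhdsWithin 0 (Set.Ioo (0:ℝ) 1))
      (nhds ((polyF n 0) ^ ((n:ℝ)⁻¹))) := h0.continuousWithinAt.tendsto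
  have h2 : (polyF n 0) ^ ((n:ℝ)⁻¹) = (n.factorial : ℝ) ^ (-(n:ℝ)⁻¹) := by
    rw [polyF_zero hn, one_div, Real.inv_rpow (by positivity),
      ← Real.rpow_neg (by positivity)]
  rw [h2] at h1
  apply h1.congr'
  filter_upwards [self_mem_nhdsWithin] with x hx
  exact (ratioF_eq_polyF hn hx.1).symm

lemma sInf_eq_helper (L : ℝ) (S : Set ℝ) (f : ℝ → ℝ)
    (hlb : ∀ r ∈ S, L ≤ r) (hmem : ∀ x : ℝ, 0 < x → x < 1 → f x ∈ S)
    (htd : Tendsto f (nhdsWithin 0 (Set.Ioo (0:ℝ) 1)) (nhds L)) : sInf S = L := by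
  have hne : S.Nonempty := ⟨f (1/2), hmem _ (by norm_num) (by norm_num)⟩
  have hnb : (nhdsWithin (0:ℝ) (Set.Ioo (0:ℝ) 1)).NeBot := by
    apply mem_closure_iff_nhdsWithin_neBot.mp
    rw [closure_Ioo (by norm_num : (0:ℝ) ≠ 1)]
    exact ⟨le_refl 0, by norm_num⟩
  apply le_antisymm
  · apply ge_of_tendsto htd
    filter_upwards [self_mem_nhdsWithin] with x hx
    exact csInf_le ⟨L, hlb⟩ (hmem x hx.1 hx.2)
  · exact le_csInf hne hlb

end analytic

section stirlingpart
open Filter Topology Real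

lemma stirling_b_pos {k : ℕ} (hk : 1 ≤ k) :
    0 < Stirling.stirlingSeq k * Real.sqrt (2 * k) := by
  have h1 : 0 < Stirling.stirlingSeq k := by
    obtain ⟨k', rfl⟩ := Nat.exists_eq_add_of_le hk
    rw [add_comm]
    exact Stirling.stirlingSeq'_pos k'
  have h2 : 0 < Real.sqrt (2 * k) := Real.sqrt_pos.mpr (by positivity)
  exact mul_pos h1 h2

lemma factorial_eq_stirling {k : ℕ} (hk : 1 ≤ k) :
    (k.factorial : ℝ) = (Stirling.stirlingSeq k * Real.sqrt (2 * k))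
      * ((k : ℝ) / Real.exp 1) ^ k := by
  have hden : (0:ℝ) < Real.sqrt (2 * k) * ((k : ℝ) / Real.exp 1) ^ k := by
    have hkpos : (0:ℝ) < (k:ℝ) := by exact_mod_cast hk
    have : (0:ℝ) < (k:ℝ) / Real.exp 1 := div_pos hkpos (Real.exp_pos 1)
    have h2 : 0 < Real.sqrt (2 * k) := Real.sqrt_pos.mpr (by positivity)
    positivity
  have := Stirling.stirlingSeq
  rw [show Stirling.stirlingSeq k * Real.sqrt (2 * k) * ((k : ℝ) / Real.exp 1) ^ k
      = Stirling.stirlingSeq k * (Real.sqrt (2 * k) * ((k : ℝ) / Real.exp 1) ^ k) by ring]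
  rw [Stirling.stirlingSeq]
  rw [div_mul_cancel₀ _ (ne_of_gt hden)]

lemma expr_eq_stirling {k : ℕ} (hk : 1 ≤ k) :
    (k : ℝ) * (k.factorial : ℝ) ^ (-(k:ℝ)⁻¹)
      = Real.exp 1 * Real.exp
          (-(Real.log (Stirling.stirlingSeq k * Real.sqrt (2 * k)) / (k : ℝ))) := by
  set b := Stirling.stirlingSeq k * Real.sqrt (2 * k) with hb
  have hbpos : 0 < b := stirling_b_pos hk
  have hkpos : (0:ℝ) < (k:ℝ) := by exact_mod_cast hk
  have hkne : (k:ℝ) ≠ 0 := ne_of_gt hkpos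
  have hkepos : (0:ℝ) < (k:ℝ) / Real.exp 1 := div_pos hkpos (Real.exp_pos 1)
  have hfpos : (0:ℝ) < (k.factorial : ℝ) := by positivity
  have hlog : Real.log (k.factorial : ℝ)
      = Real.log b + (k:ℝ) * Real.log ((k:ℝ) / Real.exp 1) := by
    rw [factorial_eq_stirling hk, Real.log_mul (ne_of_gt hbpos)
      (ne_of_gt (pow_pos hkepos k)), Real.log_pow]
  rw [Real.rpow_def_of_pos hfpos, hlog]
  have harg : (Real.log b + (k:ℝ) * Real.log ((k:ℝ) / Real.exp 1)) * (-(k:ℝ)⁻¹)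
      = (-(Real.log b / (k:ℝ))) + (- Real.log ((k:ℝ) / Real.exp 1)) := by
    field_simp
    try ring
  rw [harg, Real.exp_add]
  have hexp : Real.exp (- Real.log ((k:ℝ) / Real.exp 1)) = Real.exp 1 / (k:ℝ) := by
    rw [Real.exp_neg, Real.exp_log hkepos, inv_div]
  rw [hexp]
  field_simp
  try ring

lemma tendsto_log_div_nat :
    Tendsto (fun k : ℕ => Real.log (Stirling.stirlingSeq k * Real.sqrt (2 * k)) / (k:ℝ))
      atTop (nhds 0) := by
  have hev : ∀ᶠ k : ℕ in atTop,
      Real.log (Stirling.stirlingSeq k * Real.sqrt (2 * k)) / (k:ℝ)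
        = Real.log (Stirling.stirlingSeq k) / (k:ℝ) + Real.log (2 * (k:ℝ)) / (2 * (k:ℝ)) := by
    filter_upwards [eventually_ge_atTop 1] with k hk
    have h1 : 0 < Stirling.stirlingSeq k := by
      obtain ⟨k', rfl⟩ := Nat.exists_eq_add_of_le hk
      rw [add_comm]
      exact Stirling.stirlingSeq'_pos k'
    have hkpos : (0:ℝ) < (k:ℝ) := by exact_mod_cast hk
    have h2 : 0 < Real.sqrt (2 * k) := Real.sqrt_pos.mpr (by positivity)
    rw [Real.log_mul (ne_of_gt h1) (ne_of_gt h2), add_div]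
    congr 1
    rw [Real.log_sqrt (by positivity)]
    field_simp
    try ring
  apply Tendsto.congr' (hev.mono fun k h => h.symm)
  have hT1 : Tendsto (fun k : ℕ => Real.log (Stirling.stirlingSeq k) / (k:ℝ)) atTop (nhds 0) := by
    have hlog : Tendsto (fun k : ℕ => Real.log (Stirling.stirlingSeq k)) atTop
        (nhds (Real.log (Real.sqrt Real.pi))) :=
      ((Real.continuousAt_log (ne_of_gt (Real.sqrt_pos.mpr Real.pi_pos))).tendsto).comp
        Stirling.tendsto_stirlingSeq_sqrt_pi
    have := hlog.mul tendsto_inv_atTop_nhds_zero_nat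
    simp only [mul_zero] at this
    apply this.congr
    intro k
    rw [div_eq_mul_inv]
  have hT2 : Tendsto (fun k : ℕ => Real.log (2 * (k:ℝ)) / (2 * (k:ℝ))) atTop (nhds 0) := by
    have hg : Tendsto (fun y : ℝ => Real.log y / y) atTop (nhds 0) :=
      Real.isLittleO_log_id_atTop.tendsto_div_nhds_zero
    have hcomp : Tendsto (fun k : ℕ => 2 * (k:ℝ)) atTop atTop :=
      (tendsto_natCast_atTop_atTop).const_mul_atTop (by norm_num)
    exact hg.comp hcomp
  have := hT1.add hT2
  simpa using this

lemma part2_stirling :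
    Tendsto (fun k : ℕ => (k : ℝ) * (k.factorial : ℝ) ^ (-(k:ℝ)⁻¹))
      atTop (nhds (Real.exp 1)) := by
  have hev : ∀ᶠ k : ℕ in atTop, Real.exp 1 * Real.exp
      (-(Real.log (Stirling.stirlingSeq k * Real.sqrt (2 * k)) / (k:ℝ)))
        = (k : ℝ) * (k.factorial : ℝ) ^ (-(k:ℝ)⁻¹) := by
    filter_upwards [eventually_ge_atTop 1] with k hk
    exact (expr_eq_stirling hk).symm
  apply Tendsto.congr' hev
  have h1 : Tendsto (fun k : ℕ =>
      -(Real.log (Stirling.stirlingSeq k * Real.sqrt (2 * k)) / (k:ℝ))) atTop (nhds 0) := by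
    have := tendsto_log_div_nat.neg
    simpa using this
  have h2 := (Real.continuous_exp.tendsto 0).comp h1
  rw [Real.exp_zero] at h2
  have := h2.const_mul (Real.exp 1)
  simpa using this

end stirlingpart

/-- **Lemma (NSW Competitive Ratio).** `inf { NSW(Hℓ)/NSW(ℓ) : 0 < ℓ(1) ≤ ⋯ ≤ ℓ(n) }
= (n!)^{−1/n}`; moreover `n·(n!)^{−1/n} → e`, and the competitive ratio of water-filling
for NSW maximization with `n` offline nodes equals `(n!)^{−1/n}`. -/
theorem nsw_competitive_ratio (n : ℕ) (hn : 1 ≤ n) :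
    (sInf {r : ℝ | ∃ ℓ : Fin n → ℝ, (∀ i, 0 < ℓ i) ∧ Monotone ℓ ∧
        r = NSW n (Hvec n ℓ) / NSW n ℓ}
      = (n.factorial : ℝ) ^ (-(n : ℝ)⁻¹)) ∧
    (Filter.Tendsto (fun k : ℕ => (k : ℝ) * (k.factorial : ℝ) ^ (-(k : ℝ)⁻¹))
      Filter.atTop (nhds (Real.exp 1))) ∧
    (sInf {r : ℝ | ∃ (m : ℕ) (E : ReqSeq n m), 0 < ∑ t, E.q t ∧
        0 < NSW n (optLoad E) ∧
        r = NSW n (wfLoad E) / NSW n (optLoad E)}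
      = (n.factorial : ℝ) ^ (-(n : ℝ)⁻¹)) := by
  have hfin : Nonempty (Fin n) := ⟨⟨0, by omega⟩⟩
  refine ⟨?_, part2_stirling, ?_⟩
  · apply sInf_eq_helper _ _ (ratioF n)
    · rintro r ⟨ℓ, hpos, hmono, rfl⟩
      exact part1_lower hn hpos
    · intro x hx0 hx1
      exact ⟨qv n x, qv_pos hx0, qv_monotone (le_of_lt hx0) (le_of_lt hx1), rfl⟩
    · exact tendsto_ratioF hn
  · apply sInf_eq_helper _ _ (ratioF n)
    · rintro r ⟨m, E, hq, hopt, rfl⟩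
      exact part3_lower hn E hopt
    · intro x hx0 hx1
      refine ⟨n, nestedE n x hx0, ?_, ?_, ?_⟩
      · exact Finset.sum_pos (fun t _ => (nestedE n x hx0).q_pos t) Finset.univ_nonempty
      · rw [NSW_def]
        apply Real.rpow_pos_of_pos
        rw [prod_optLoad_nestedE hx0 (le_of_lt hx1)]
        exact Finset.prod_pos fun i _ => qv_pos hx0 i
      · unfold ratioF
        rw [wfLoad_nestedE hx0]
        congr 1
        rw [NSW_def, NSW_def, prod_optLoad_nestedE hx0 (le_of_lt hx1)]
    · exact tendsto_ratioF hn
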